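/- Let m, d ≥ 1 and for each j ∈ {−1, 0, 1}^{m·d} define a finite point set in ℝ^d as in the block construction: blocks centered at 4i·e₁ with points 4i·e₁ ± 0.5·e_ℓ and, when j_k ≠ 0 (k = (i−1)d + ℓ), additional points 4i·e₁ + (0.1·j_k − 1)·e_ℓ and 4i·e₁ + (0.1·j_k + 1)·e_ℓ. Then distinct choices of j yield point sets whose optimal clusterings induce distinct clusterings on the common core {4i·e₁, 4i·e₁ ± 0.5·e_ℓ}. -/
import Mathlib


open scoped Classical

/-- A clustering of a finite set `P ⊆ ℝ^d` (sup norm): a partition of `P` into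
nonempty subsets, each of sup-norm diameter at most 1. -/
def IsClusteringPi (d : ℕ) (P : Finset (Fin d → ℝ)) (𝒞 : Finset (Finset (Fin d → ℝ))) : Prop :=
  (∀ C ∈ 𝒞, C.Nonempty ∧ C ⊆ P ∧ ∀ a ∈ C, ∀ b ∈ C, dist a b ≤ 1) ∧
  ∀ p ∈ P, ∃! C, C ∈ 𝒞 ∧ p ∈ C

/-- The minimum number of clusters of diameter at most 1 needed to partition `P`. -/
noncomputable def minClustersPi (d : ℕ) (P : Finset (Fin d → ℝ)) : ℕ :=
  sInf {n | ∃ 𝒞, IsClusteringPi d P 𝒞 ∧ 𝒞.card = n}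

/-- The point `x·e₁ + y·e_ℓ` of `ℝ^d` (`e₁` is the first standard unit vector). -/
def pt (d : ℕ) (hd : 0 < d) (x : ℝ) (ℓ : Fin d) (y : ℝ) : Fin d → ℝ :=
  fun t => (if t = ⟨0, hd⟩ then x else 0) + (if t = ℓ then y else 0)

/-- The common core: for each block `1 ≤ i ≤ m`, the points
`4i·e₁` and `4i·e₁ ± 0.5·e_ℓ` for every `1 ≤ ℓ ≤ d`. -/
noncomputable def core (m d : ℕ) (hd : 0 < d) : Finset (Fin d → ℝ) :=
  (Finset.Icc 1 m).biUnion fun i =>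
    {pt d hd (4 * i) ⟨0, hd⟩ 0} ∪
      Finset.univ.biUnion fun ℓ : Fin d =>
        {pt d hd (4 * i) ℓ (-0.5), pt d hd (4 * i) ℓ 0.5}

/-- The full point set `P_j`: the core together with, for each `i, ℓ` with
`j_k ≠ 0` (`k = (i−1)d + ℓ`), the points `4i·e₁ + (0.1·j_k ± 1)·e_ℓ`. -/
noncomputable def pointSet (m d : ℕ) (hd : 0 < d) (j : ℕ → ℤ) : Finset (Fin d → ℝ) :=
  core m d hd ∪
    (Finset.Icc 1 m).biUnion fun i =>
      Finset.univ.biUnion fun ℓ : Fin d =>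
        if j ((i - 1) * d + ℓ.val) = 0 then ∅
        else
          {pt d hd (4 * i) ℓ (0.1 * j ((i - 1) * d + ℓ.val) - 1),
           pt d hd (4 * i) ℓ (0.1 * j ((i - 1) * d + ℓ.val) + 1)}

/-- The clustering induced on a subset `S` by a clustering `𝒞`. -/
noncomputable def restrict (d : ℕ) (𝒞 : Finset (Finset (Fin d → ℝ)))
    (S : Finset (Fin d → ℝ)) : Finset (Finset (Fin d → ℝ)) :=
  (𝒞.image fun C => C ∩ S).filter Finset.Nonempty


section Basics

variable {d : ℕ} (hd : 0 < d)

lemma pt_apply (x : ℝ) (ℓ : Fin d) (y : ℝ) (t : Fin d) :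
    pt d hd x ℓ y t = (if t = ⟨0, hd⟩ then x else 0) + (if t = ℓ then y else 0) := rfl

lemma pt_zero (x : ℝ) (ℓ ℓ' : Fin d) : pt d hd x ℓ 0 = pt d hd x ℓ' 0 := by
  funext t; simp [pt_apply]

lemma nat_abs_ge {i i' : ℕ} (h : i ≠ i') : (1:ℝ) ≤ |(i:ℝ) - (i':ℝ)| := by
  rcases lt_or_gt_of_ne h with h' | h'
  · rw [abs_sub_comm, le_abs]; left
    have : (i:ℝ) + 1 ≤ (i':ℝ) := by exact_mod_cast h'
    linarith
  · rw [le_abs]; left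
    have : (i':ℝ) + 1 ≤ (i:ℝ) := by exact_mod_cast h'
    linarith

lemma dist_pt_le {x : ℝ} {ℓ ℓ' : Fin d} {y y' r : ℝ} (hr : 0 ≤ r)
    (h1 : ℓ = ℓ' → |y - y'| ≤ r) (h2 : ℓ ≠ ℓ' → |y| ≤ r ∧ |y'| ≤ r) :
    dist (pt d hd x ℓ y) (pt d hd x ℓ' y') ≤ r := by
  rw [dist_pi_le_iff hr]
  intro t
  rw [Real.dist_eq, pt_apply, pt_apply]
  have e : (if t = ⟨0, hd⟩ then x else 0) + (if t = ℓ then y else 0) -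
      ((if t = ⟨0, hd⟩ then x else 0) + (if t = ℓ' then y' else 0)) =
      (if t = ℓ then y else 0) - (if t = ℓ' then y' else 0) := by ring
  rw [e]
  by_cases h : t = ℓ <;> by_cases h' : t = ℓ'
  · rw [if_pos h, if_pos h']; exact h1 (h.symm.trans h')
  · rw [if_pos h, if_neg h', sub_zero]; exact (h2 (fun hh => h' (h.trans hh))).1
  · rw [if_neg h, if_pos h', zero_sub, abs_neg]; exact (h2 (fun hh => h (h'.trans hh.symm))).2
  · rw [if_neg h, if_neg h']; simpa using hr

lemma one_lt_dist_of_coord {p q : Fin d → ℝ} (t : Fin d) (h : 1 < |p t - q t|) :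
    1 < dist p q :=
  lt_of_lt_of_le (by rw [← Real.dist_eq] at h; exact h) (dist_le_pi_dist p q t)

lemma one_lt_dist_pt_same {x : ℝ} {ℓ ℓ' : Fin d} {y y' : ℝ}
    (h : 1 < |y - (if ℓ = ℓ' then y' else 0)|) :
    1 < dist (pt d hd x ℓ y) (pt d hd x ℓ' y') := by
  apply one_lt_dist_of_coord ℓ
  rw [pt_apply, pt_apply]
  have e : (if ℓ = ⟨0, hd⟩ then x else 0) + (if ℓ = ℓ then y else 0) -
      ((if ℓ = ⟨0, hd⟩ then x else 0) + (if ℓ = ℓ' then y' else 0)) =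
      y - (if ℓ = ℓ' then y' else 0) := by simp only [eq_self_iff_true, if_true]; ring
  rw [e]; exact h

lemma one_lt_dist_pt_cross {i i' : ℕ} {ℓ ℓ' : Fin d} {y y' : ℝ}
    (hii : i ≠ i') (hy : |y| ≤ 1.1) (hy' : |y'| ≤ 1.1) :
    1 < dist (pt d hd (4*i) ℓ y) (pt d hd (4*i') ℓ' y') := by
  apply one_lt_dist_of_coord ⟨0, hd⟩
  rw [pt_apply, pt_apply]
  rw [if_pos rfl, if_pos rfl]
  have hy2 : |(if (⟨0,hd⟩:Fin d) = ℓ then y else 0)| ≤ 1.1 := by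
    split_ifs
    · exact hy
    · norm_num
  have hy2' : |(if (⟨0,hd⟩:Fin d) = ℓ' then y' else 0)| ≤ 1.1 := by
    split_ifs
    · exact hy'
    · norm_num
  have ha := abs_le.mp hy2
  have hb := abs_le.mp hy2'
  have h4 : (4:ℝ) ≤ |4*(i:ℝ) - 4*(i':ℝ)| := by
    have h1 := nat_abs_ge hii
    have : |4*(i:ℝ) - 4*(i':ℝ)| = 4 * |(i:ℝ) - (i':ℝ)| := by
      rw [show 4*(i:ℝ) - 4*(i':ℝ) = 4*((i:ℝ)-(i':ℝ)) by ring, abs_mul]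
      norm_num
    rw [this]; linarith
  rcases abs_cases (4*(i:ℝ) - 4*(i':ℝ)) with ⟨he, hp⟩ | ⟨he, hp⟩
  · refine lt_of_lt_of_le ?_ (le_abs_self _)
    rw [he] at h4; linarith
  · refine lt_of_lt_of_le ?_ (neg_le_abs _)
    rw [he] at h4; linarith

lemma pt_inj {i i' : ℕ} {ℓ ℓ' : Fin d} {y y' : ℝ}
    (hy : |y| ≤ 1.1) (hy' : |y'| ≤ 1.1)
    (h : pt d hd (4*i) ℓ y = pt d hd (4*i') ℓ' y') :
    i = i' ∧ y = (if ℓ = ℓ' then y' else 0) ∧ y' = (if ℓ' = ℓ then y else 0) := by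
  have hii : i = i' := by
    by_contra hne
    have h2 := one_lt_dist_pt_cross hd hne hy hy' (ℓ := ℓ) (ℓ' := ℓ')
    rw [h] at h2
    simp at h2
    linarith
  subst hii
  refine ⟨rfl, ?_, ?_⟩
  · have h1 := congrFun h ℓ
    rw [pt_apply, pt_apply, if_pos rfl] at h1
    by_cases hll : ℓ = ℓ'
    · rw [if_pos hll] at h1 ⊢; linarith
    · rw [if_neg hll] at h1 ⊢; linarith
  · have h2 := congrFun h ℓ'
    rw [pt_apply, pt_apply, if_pos rfl] at h2
    by_cases hll : ℓ' = ℓ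
    · rw [if_pos hll] at h2 ⊢; linarith
    · rw [if_neg hll] at h2 ⊢; linarith

end Basics

section Constr

open Finset

variable (m d : ℕ) (hd : 0 < d) (j : ℕ → ℤ)

/-- index of coordinate ℓ of block i -/
def kk (i : ℕ) (ℓ : Fin d) : ℕ := (i - 1) * d + ℓ.val

lemma mem_core_iff {p : Fin d → ℝ} : p ∈ core m d hd ↔
    ∃ i ∈ Finset.Icc 1 m, p = pt d hd (4*i) ⟨0,hd⟩ 0 ∨
      ∃ ℓ : Fin d, p = pt d hd (4*i) ℓ (-0.5) ∨ p = pt d hd (4*i) ℓ 0.5 := by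
  simp [core]

lemma mem_pointSet_iff {p : Fin d → ℝ} : p ∈ pointSet m d hd j ↔
    p ∈ core m d hd ∨
    ∃ i ∈ Finset.Icc 1 m, ∃ ℓ : Fin d, j (kk d i ℓ) ≠ 0 ∧
      (p = pt d hd (4*i) ℓ (0.1 * (j (kk d i ℓ) : ℝ) - 1) ∨
       p = pt d hd (4*i) ℓ (0.1 * (j (kk d i ℓ) : ℝ) + 1)) := by
  unfold pointSet kk
  rw [Finset.mem_union]
  apply or_congr Iff.rfl
  simp only [Finset.mem_biUnion]
  constructor
  · rintro ⟨i, hi, ℓ, -, hp⟩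
    by_cases h : j ((i-1)*d + ℓ.val) = 0
    · rw [if_pos h] at hp; simp at hp
    · rw [if_neg h] at hp
      simp only [Finset.mem_insert, Finset.mem_singleton] at hp
      exact ⟨i, hi, ℓ, h, hp⟩
  · rintro ⟨i, hi, ℓ, h, hp⟩
    refine ⟨i, hi, ℓ, Finset.mem_univ _, ?_⟩
    rw [if_neg h]
    simp only [Finset.mem_insert, Finset.mem_singleton]
    exact hp

end Constr

section Constr2

open Finset

variable (m d : ℕ) (hd : 0 < d) (j : ℕ → ℤ)

lemma pt_congr {x y y' : ℝ} (ℓ : Fin d) (h : y = y') : pt d hd x ℓ y = pt d hd x ℓ y' := by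
  rw [h]

noncomputable def fpt (i : ℕ) (ℓ : Fin d) : Fin d → ℝ :=
  pt d hd (4*i) ℓ (1.1 * (j (kk d i ℓ) : ℝ))

noncomputable def BiSet (i : ℕ) : Finset (Fin d → ℝ) :=
  {pt d hd (4*i) ⟨0,hd⟩ 0} ∪ Finset.univ.biUnion fun ℓ : Fin d =>
    if j (kk d i ℓ) = 0 then {pt d hd (4*i) ℓ (-0.5), pt d hd (4*i) ℓ 0.5}
    else {pt d hd (4*i) ℓ (-0.5 * (j (kk d i ℓ) : ℝ)), pt d hd (4*i) ℓ (-0.9 * (j (kk d i ℓ) : ℝ))}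

/-- the allowed offsets inside the big cluster of block i -/
def QQ (i : ℕ) (ℓ : Fin d) (y : ℝ) : Prop :=
  y = 0 ∨ (j (kk d i ℓ) = 0 ∧ (y = -0.5 ∨ y = 0.5)) ∨
    (j (kk d i ℓ) ≠ 0 ∧ (y = -0.5 * (j (kk d i ℓ) : ℝ) ∨ y = -0.9 * (j (kk d i ℓ) : ℝ)))

lemma mem_BiSet_iff {i : ℕ} {p : Fin d → ℝ} :
    p ∈ BiSet d hd j i ↔ ∃ ℓ y, p = pt d hd (4*i) ℓ y ∧ QQ d j i ℓ y := by
  unfold BiSet QQ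
  rw [Finset.mem_union, Finset.mem_singleton, Finset.mem_biUnion]
  constructor
  · rintro (rfl | ⟨ℓ, -, hp⟩)
    · exact ⟨⟨0,hd⟩, 0, rfl, Or.inl rfl⟩
    · by_cases h : j (kk d i ℓ) = 0
      · rw [if_pos h] at hp
        simp only [Finset.mem_insert, Finset.mem_singleton] at hp
        rcases hp with rfl | rfl
        · exact ⟨ℓ, _, rfl, Or.inr (Or.inl ⟨h, Or.inl rfl⟩)⟩
        · exact ⟨ℓ, _, rfl, Or.inr (Or.inl ⟨h, Or.inr rfl⟩)⟩
      · rw [if_neg h] at hp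
        simp only [Finset.mem_insert, Finset.mem_singleton] at hp
        rcases hp with rfl | rfl
        · exact ⟨ℓ, _, rfl, Or.inr (Or.inr ⟨h, Or.inl rfl⟩)⟩
        · exact ⟨ℓ, _, rfl, Or.inr (Or.inr ⟨h, Or.inr rfl⟩)⟩
  · rintro ⟨ℓ, y, rfl, (rfl | ⟨h, (rfl | rfl)⟩ | ⟨h, (rfl | rfl)⟩)⟩
    · exact Or.inl (pt_zero hd _ _ _)
    · exact Or.inr ⟨ℓ, Finset.mem_univ _, by rw [if_pos h]; simp⟩
    · exact Or.inr ⟨ℓ, Finset.mem_univ _, by rw [if_pos h]; simp⟩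
    · exact Or.inr ⟨ℓ, Finset.mem_univ _, by rw [if_neg h]; simp⟩
    · exact Or.inr ⟨ℓ, Finset.mem_univ _, by rw [if_neg h]; simp⟩

noncomputable def Idx : Finset (ℕ × Option (Fin d)) :=
  (Finset.Icc 1 m ×ˢ Finset.univ).filter fun a => ∀ ℓ : Fin d, a.2 = some ℓ → j (kk d a.1 ℓ) ≠ 0

noncomputable def FF : ℕ × Option (Fin d) → (Fin d → ℝ)
  | (i, none) => pt d hd (4*i) ⟨0,hd⟩ 0
  | (i, some ℓ) => fpt d hd j i ℓ

noncomputable def GG : ℕ × Option (Fin d) → Finset (Fin d → ℝ)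
  | (i, none) => BiSet d hd j i
  | (i, some ℓ) => {fpt d hd j i ℓ, pt d hd (4*i) ℓ (0.5 * (j (kk d i ℓ) : ℝ))}

noncomputable def CC0 : Finset (Finset (Fin d → ℝ)) := (Idx m d j).image (GG d hd j)

lemma mem_Idx_iff {a : ℕ × Option (Fin d)} :
    a ∈ Idx m d j ↔ a.1 ∈ Finset.Icc 1 m ∧ ∀ ℓ : Fin d, a.2 = some ℓ → j (kk d a.1 ℓ) ≠ 0 := by
  unfold Idx
  rw [Finset.mem_filter, Finset.mem_product]
  simp

lemma FF_mem_GG (a : ℕ × Option (Fin d)) : FF d hd j a ∈ GG d hd j a := by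
  rcases a with ⟨i, _ | ℓ⟩
  · rw [show FF d hd j (i, none) = pt d hd (4*i) ⟨0,hd⟩ 0 from rfl,
      show GG d hd j (i, none) = BiSet d hd j i from rfl]
    rw [mem_BiSet_iff]
    exact ⟨⟨0,hd⟩, 0, rfl, Or.inl rfl⟩
  · rw [show FF d hd j (i, some ℓ) = fpt d hd j i ℓ from rfl,
      show GG d hd j (i, some ℓ) = {fpt d hd j i ℓ, pt d hd (4*i) ℓ (0.5 * (j (kk d i ℓ) : ℝ))} from rfl]
    exact Finset.mem_insert_self _ _

end Constr2

section Constr3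

open Finset

variable (m d : ℕ) (hd : 0 < d) (j : ℕ → ℤ)

lemma QQ_abs (hj : ∀ k, j k = -1 ∨ j k = 0 ∨ j k = 1) {i : ℕ} {ℓ : Fin d} {y : ℝ}
    (h : QQ d j i ℓ y) : |y| ≤ 0.9 := by
  rcases h with rfl | ⟨h0, rfl | rfl⟩ | ⟨h0, rfl | rfl⟩ <;>
    rcases hj (kk d i ℓ) with hs | hs | hs <;>
    first
      | (exact absurd hs h0)
      | (rw [hs]; push_cast; norm_num [abs_le])
      | norm_num [abs_le]

lemma GG_subset (hj : ∀ k, j k = -1 ∨ j k = 0 ∨ j k = 1) {a : ℕ × Option (Fin d)}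
    (ha : a ∈ Idx m d j) : GG d hd j a ⊆ pointSet m d hd j := by
  have hIcc := (mem_Idx_iff m d j |>.mp ha).1
  intro p hp
  rw [mem_pointSet_iff]
  rcases a with ⟨i, _ | ℓ⟩
  · rw [show GG d hd j (i, none) = BiSet d hd j i from rfl, mem_BiSet_iff] at hp
    obtain ⟨ℓ, y, rfl, hq⟩ := hp
    rcases hq with rfl | ⟨h0, rfl | rfl⟩ | ⟨h0, hy⟩
    · exact Or.inl ((mem_core_iff m d hd).mpr ⟨i, hIcc, Or.inl (pt_zero hd _ _ _)⟩)
    · exact Or.inl ((mem_core_iff m d hd).mpr ⟨i, hIcc, Or.inr ⟨ℓ, Or.inl rfl⟩⟩)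
    · exact Or.inl ((mem_core_iff m d hd).mpr ⟨i, hIcc, Or.inr ⟨ℓ, Or.inr rfl⟩⟩)
    · rcases hj (kk d i ℓ) with hs | hs | hs
      · rcases hy with rfl | rfl
        · refine Or.inl ((mem_core_iff m d hd).mpr ⟨i, hIcc, Or.inr ⟨ℓ, Or.inr
            ((pt_congr d hd ℓ (by rw [hs]; push_cast; norm_num)).symm)⟩⟩)
        · exact Or.inr ⟨i, hIcc, ℓ, h0, Or.inr (pt_congr d hd ℓ (by rw [hs]; push_cast; norm_num))⟩
      · exact absurd hs h0
      · rcases hy with rfl | rfl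
        · refine Or.inl ((mem_core_iff m d hd).mpr ⟨i, hIcc, Or.inr ⟨ℓ, Or.inl
            ((pt_congr d hd ℓ (by rw [hs]; push_cast; norm_num)).symm)⟩⟩)
        · exact Or.inr ⟨i, hIcc, ℓ, h0, Or.inl (pt_congr d hd ℓ (by rw [hs]; push_cast; norm_num))⟩
  · have h0 : j (kk d i ℓ) ≠ 0 := (mem_Idx_iff m d j |>.mp ha).2 ℓ rfl
    rw [show GG d hd j (i, some ℓ) =
      {fpt d hd j i ℓ, pt d hd (4*i) ℓ (0.5 * (j (kk d i ℓ) : ℝ))} from rfl] at hp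
    rw [Finset.mem_insert, Finset.mem_singleton] at hp
    rcases hj (kk d i ℓ) with hs | hs | hs
    · rcases hp with rfl | rfl
      · exact Or.inr ⟨i, hIcc, ℓ, h0, Or.inl (pt_congr d hd ℓ (by rw [hs]; push_cast; norm_num))⟩
      · exact Or.inl ((mem_core_iff m d hd).mpr ⟨i, hIcc, Or.inr ⟨ℓ, Or.inl
          ((pt_congr d hd ℓ (by rw [hs]; push_cast; norm_num)).symm)⟩⟩)
    · exact absurd hs h0
    · rcases hp with rfl | rfl
      · exact Or.inr ⟨i, hIcc, ℓ, h0, Or.inr (pt_congr d hd ℓ (by rw [hs]; push_cast; norm_num))⟩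
      · exact Or.inl ((mem_core_iff m d hd).mpr ⟨i, hIcc, Or.inr ⟨ℓ, Or.inr
          ((pt_congr d hd ℓ (by rw [hs]; push_cast; norm_num)).symm)⟩⟩)

lemma GG_diam (hj : ∀ k, j k = -1 ∨ j k = 0 ∨ j k = 1) (a : ℕ × Option (Fin d)) :
    ∀ p ∈ GG d hd j a, ∀ q ∈ GG d hd j a, dist p q ≤ 1 := by
  rcases a with ⟨i, _ | ℓ⟩
  · intro p hp q hq
    rw [show GG d hd j (i, none) = BiSet d hd j i from rfl, mem_BiSet_iff] at hp hq
    obtain ⟨ℓ, y, rfl, hQ⟩ := hp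
    obtain ⟨ℓ', y', rfl, hQ'⟩ := hq
    refine dist_pt_le hd (by norm_num) ?_ ?_
    · rintro rfl
      rcases hQ with rfl | ⟨h0, rfl | rfl⟩ | ⟨h0, rfl | rfl⟩ <;>
        rcases hQ' with rfl | ⟨h0', rfl | rfl⟩ | ⟨h0', rfl | rfl⟩ <;>
        first
          | (exact absurd h0 h0')
          | (exact absurd h0' h0)
          | (rcases hj (kk d i ℓ) with hs | hs | hs <;>
              first
                | (exact absurd hs h0)
                | (rw [hs]; push_cast; norm_num [abs_le])
                | norm_num [abs_le])
    · intro _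
      constructor
      · have := QQ_abs d j hj hQ; linarith [abs_nonneg y]
      · have := QQ_abs d j hj hQ'; linarith [abs_nonneg y']
  · intro p hp q hq
    rw [show GG d hd j (i, some ℓ) =
      {fpt d hd j i ℓ, pt d hd (4*i) ℓ (0.5 * (j (kk d i ℓ) : ℝ))} from rfl,
      Finset.mem_insert, Finset.mem_singleton] at hp hq
    have key : ∀ y y' : ℝ, |y - y'| ≤ 1 →
        dist (pt d hd (4*i) ℓ y) (pt d hd (4*i) ℓ y') ≤ 1 := by
      intro y y' h
      exact dist_pt_le hd (by norm_num) (fun _ => h) (fun hne => absurd rfl hne)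
    rcases hj (kk d i ℓ) with hs | hs | hs <;>
      rcases hp with rfl | rfl <;> rcases hq with rfl | rfl <;>
      refine key _ _ ?_ <;> rw [hs] <;> push_cast <;> norm_num [abs_le]
end Constr3

section Constr4

open Finset

variable (m d : ℕ) (hd : 0 < d) (j : ℕ → ℤ)

lemma none_mem_Idx {i : ℕ} (hi : i ∈ Finset.Icc 1 m) : (i, (none : Option (Fin d))) ∈ Idx m d j := by
  rw [mem_Idx_iff]; exact ⟨hi, by intro ℓ h; simp at h⟩

lemma some_mem_Idx {i : ℕ} {ℓ : Fin d} (hi : i ∈ Finset.Icc 1 m) (h0 : j (kk d i ℓ) ≠ 0) :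
    (i, some ℓ) ∈ Idx m d j := by
  rw [mem_Idx_iff]
  exact ⟨hi, by intro ℓ' h; rw [Option.some_inj] at h; subst h; exact h0⟩

lemma mem_BiSet_of (i : ℕ) (ℓ : Fin d) (y : ℝ) (h : QQ d j i ℓ y) :
    pt d hd (4*i) ℓ y ∈ BiSet d hd j i := (mem_BiSet_iff d hd j).mpr ⟨ℓ, y, rfl, h⟩

lemma cover (hj : ∀ k, j k = -1 ∨ j k = 0 ∨ j k = 1) {p : Fin d → ℝ}
    (hp : p ∈ pointSet m d hd j) : ∃ a ∈ Idx m d j, p ∈ GG d hd j a := by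
  rw [mem_pointSet_iff] at hp
  rcases hp with hp | ⟨i, hi, ℓ, h0, hp⟩
  · rw [mem_core_iff] at hp
    obtain ⟨i, hi, hp⟩ := hp
    rcases hp with rfl | ⟨ℓ, rfl | rfl⟩
    · exact ⟨(i, none), none_mem_Idx m d j hi,
        mem_BiSet_of d hd j i _ 0 (Or.inl rfl)⟩
    · -- p = pt (4i) ℓ (-0.5)
      by_cases h0 : j (kk d i ℓ) = 0
      · exact ⟨(i, none), none_mem_Idx m d j hi,
          mem_BiSet_of d hd j i ℓ _ (Or.inr (Or.inl ⟨h0, Or.inl rfl⟩))⟩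
      · rcases hj (kk d i ℓ) with hs | hs | hs
        · -- j = -1 : -0.5 = 0.5 * j, in the pair
          refine ⟨(i, some ℓ), some_mem_Idx m d j hi h0, ?_⟩
          rw [show GG d hd j (i, some ℓ) =
            {fpt d hd j i ℓ, pt d hd (4*i) ℓ (0.5 * (j (kk d i ℓ) : ℝ))} from rfl]
          rw [Finset.mem_insert, Finset.mem_singleton]
          exact Or.inr (pt_congr d hd ℓ (by rw [hs]; push_cast; norm_num))
        · exact absurd hs h0
        · -- j = 1 : -0.5 = -0.5 * j, in BiSet
          exact ⟨(i, none), none_mem_Idx m d j hi, mem_BiSet_of d hd j i ℓ _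
            (Or.inr (Or.inr ⟨h0, Or.inl (by rw [hs]; push_cast; norm_num)⟩))⟩
    · -- p = pt (4i) ℓ 0.5
      by_cases h0 : j (kk d i ℓ) = 0
      · exact ⟨(i, none), none_mem_Idx m d j hi,
          mem_BiSet_of d hd j i ℓ _ (Or.inr (Or.inl ⟨h0, Or.inr rfl⟩))⟩
      · rcases hj (kk d i ℓ) with hs | hs | hs
        · -- j = -1: 0.5 = -0.5 * j, in BiSet
          exact ⟨(i, none), none_mem_Idx m d j hi, mem_BiSet_of d hd j i ℓ _
            (Or.inr (Or.inr ⟨h0, Or.inl (by rw [hs]; push_cast; norm_num)⟩))⟩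
        · exact absurd hs h0
        · -- j = 1 : 0.5 = 0.5*j, pair
          refine ⟨(i, some ℓ), some_mem_Idx m d j hi h0, ?_⟩
          rw [show GG d hd j (i, some ℓ) =
            {fpt d hd j i ℓ, pt d hd (4*i) ℓ (0.5 * (j (kk d i ℓ) : ℝ))} from rfl]
          rw [Finset.mem_insert, Finset.mem_singleton]
          exact Or.inr (pt_congr d hd ℓ (by rw [hs]; push_cast; norm_num))
  · -- extra points
    rcases hj (kk d i ℓ) with hs | hs | hs
    · rcases hp with rfl | rfl
      · -- 0.1*(-1) - 1 = -1.1 = 1.1 * j : far point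
        refine ⟨(i, some ℓ), some_mem_Idx m d j hi h0, ?_⟩
        rw [show GG d hd j (i, some ℓ) =
          {fpt d hd j i ℓ, pt d hd (4*i) ℓ (0.5 * (j (kk d i ℓ) : ℝ))} from rfl]
        rw [Finset.mem_insert, Finset.mem_singleton]
        exact Or.inl (pt_congr d hd ℓ (by rw [hs]; push_cast; norm_num))
      · -- 0.1*(-1) + 1 = 0.9 = -0.9 * j : BiSet
        exact ⟨(i, none), none_mem_Idx m d j hi, mem_BiSet_of d hd j i ℓ _
          (Or.inr (Or.inr ⟨h0, Or.inr (by rw [hs]; push_cast; norm_num)⟩))⟩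
    · exact absurd hs h0
    · rcases hp with rfl | rfl
      · -- 0.1*1 - 1 = -0.9 = -0.9*j : BiSet
        exact ⟨(i, none), none_mem_Idx m d j hi, mem_BiSet_of d hd j i ℓ _
          (Or.inr (Or.inr ⟨h0, Or.inr (by rw [hs]; push_cast; norm_num)⟩))⟩
      · -- 0.1*1 + 1 = 1.1 = 1.1*j : far point
        refine ⟨(i, some ℓ), some_mem_Idx m d j hi h0, ?_⟩
        rw [show GG d hd j (i, some ℓ) =
          {fpt d hd j i ℓ, pt d hd (4*i) ℓ (0.5 * (j (kk d i ℓ) : ℝ))} from rfl]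
        rw [Finset.mem_insert, Finset.mem_singleton]
        exact Or.inl (pt_congr d hd ℓ (by rw [hs]; push_cast; norm_num))

end Constr4

section Constr5

open Finset

variable (m d : ℕ) (hd : 0 < d) (j : ℕ → ℤ)

lemma s_cases (hj : ∀ k, j k = -1 ∨ j k = 0 ∨ j k = 1) {k : ℕ} (h0 : j k ≠ 0) :
    j k = 1 ∨ j k = -1 := by
  rcases hj k with h | h | h
  · exact Or.inr h
  · exact absurd h h0
  · exact Or.inl h

lemma pair_y_facts (hj : ∀ k, j k = -1 ∨ j k = 0 ∨ j k = 1) {k : ℕ} (h0 : j k ≠ 0) {y' : ℝ}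
    (h : y' = 1.1 * (j k : ℝ) ∨ y' = 0.5 * (j k : ℝ)) : |y'| ≤ 1.1 ∧ y' ≠ 0 := by
  rcases h with rfl | rfl <;> rcases s_cases j hj h0 with h | h <;> rw [h] <;> push_cast <;>
    constructor <;> norm_num [abs_le]

lemma disj_none_some (hj : ∀ k, j k = -1 ∨ j k = 0 ∨ j k = 1) {i i' : ℕ} {ℓb : Fin d}
    (h0 : j (kk d i' ℓb) ≠ 0) {p : Fin d → ℝ}
    (hpa : p ∈ BiSet d hd j i) (hpb : p ∈ GG d hd j (i', some ℓb)) : False := by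
  rw [mem_BiSet_iff] at hpa
  obtain ⟨ℓ, y, rfl, hQ⟩ := hpa
  have hy : |y| ≤ 1.1 := le_trans (QQ_abs d j hj hQ) (by norm_num)
  rw [show GG d hd j (i', some ℓb) =
    {fpt d hd j i' ℓb, pt d hd (4*i') ℓb (0.5 * (j (kk d i' ℓb) : ℝ))} from rfl,
    Finset.mem_insert, Finset.mem_singleton] at hpb
  have hs := s_cases j hj h0
  have hy'b : ∀ y' : ℝ, (y' = 1.1 * (j (kk d i' ℓb) : ℝ) ∨ y' = 0.5 * (j (kk d i' ℓb) : ℝ)) →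
      |y'| ≤ 1.1 ∧ y' ≠ 0 := fun y' h => pair_y_facts j hj h0 h
  have hrep : ∃ y' : ℝ, pt d hd (4*(i:ℕ)) ℓ y = pt d hd (4*(i':ℕ)) ℓb y' ∧
      (y' = 1.1 * (j (kk d i' ℓb) : ℝ) ∨ y' = 0.5 * (j (kk d i' ℓb) : ℝ)) := by
    rcases hpb with h | h
    · exact ⟨_, h, Or.inl rfl⟩
    · exact ⟨_, h, Or.inr rfl⟩
  obtain ⟨y', heq, hy'⟩ := hrep
  obtain ⟨hy'le, hy'ne⟩ := hy'b y' hy'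
  obtain ⟨hii, h1, h2⟩ := pt_inj hd hy hy'le heq
  subst hii
  by_cases hll : ℓ = ℓb
  · subst hll
    rw [if_pos rfl] at h1
    subst h1
    rcases hQ with h | ⟨hz, _⟩ | ⟨_, hYY⟩
    · exact hy'ne h
    · exact h0 hz
    · rcases hs with h | h <;> rw [h] at hYY hy' <;> push_cast at hYY hy' <;>
        rcases hYY with rfl | rfl <;> rcases hy' with h' | h' <;> norm_num at h'
  · rw [if_neg (fun hh => hll hh.symm)] at h2
    exact hy'ne h2

lemma GG_disj (hj : ∀ k, j k = -1 ∨ j k = 0 ∨ j k = 1) {a b : ℕ × Option (Fin d)}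
    (ha : a ∈ Idx m d j) (hb : b ∈ Idx m d j) (hab : a ≠ b) {p : Fin d → ℝ}
    (hpa : p ∈ GG d hd j a) (hpb : p ∈ GG d hd j b) : False := by
  rcases a with ⟨ia, _ | ℓa⟩ <;> rcases b with ⟨ib, _ | ℓb⟩
  · -- none , none : different blocks
    have hne : ia ≠ ib := fun h => hab (by rw [h])
    rw [show GG d hd j (ia, none) = BiSet d hd j ia from rfl, mem_BiSet_iff] at hpa
    rw [show GG d hd j (ib, none) = BiSet d hd j ib from rfl, mem_BiSet_iff] at hpb
    obtain ⟨ℓ, y, rfl, hQ⟩ := hpa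
    obtain ⟨ℓ', y', heq, hQ'⟩ := hpb
    have h1 := le_trans (QQ_abs d j hj hQ) (by norm_num : (0.9:ℝ) ≤ 1.1)
    have h2 := le_trans (QQ_abs d j hj hQ') (by norm_num : (0.9:ℝ) ≤ 1.1)
    exact hne (pt_inj hd h1 h2 heq).1
  · exact disj_none_some d hd j hj ((mem_Idx_iff m d j |>.mp hb).2 ℓb rfl) hpa hpb
  · exact disj_none_some d hd j hj ((mem_Idx_iff m d j |>.mp ha).2 ℓa rfl) hpb hpa
  · -- some, some
    have h0a := (mem_Idx_iff m d j |>.mp ha).2 ℓa rfl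
    have h0b := (mem_Idx_iff m d j |>.mp hb).2 ℓb rfl
    have hsa := s_cases j hj h0a
    have hsb := s_cases j hj h0b
    rw [show GG d hd j (ia, some ℓa) =
      {fpt d hd j ia ℓa, pt d hd (4*ia) ℓa (0.5 * (j (kk d ia ℓa) : ℝ))} from rfl,
      Finset.mem_insert, Finset.mem_singleton] at hpa
    rw [show GG d hd j (ib, some ℓb) =
      {fpt d hd j ib ℓb, pt d hd (4*ib) ℓb (0.5 * (j (kk d ib ℓb) : ℝ))} from rfl,
      Finset.mem_insert, Finset.mem_singleton] at hpb
    have hrepa : ∃ y : ℝ, p = pt d hd (4*(ia:ℕ)) ℓa y ∧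
        (y = 1.1 * (j (kk d ia ℓa) : ℝ) ∨ y = 0.5 * (j (kk d ia ℓa) : ℝ)) := by
      rcases hpa with rfl | rfl
      · exact ⟨_, rfl, Or.inl rfl⟩
      · exact ⟨_, rfl, Or.inr rfl⟩
    have hrepb : ∃ y : ℝ, p = pt d hd (4*(ib:ℕ)) ℓb y ∧
        (y = 1.1 * (j (kk d ib ℓb) : ℝ) ∨ y = 0.5 * (j (kk d ib ℓb) : ℝ)) := by
      rcases hpb with rfl | rfl
      · exact ⟨_, rfl, Or.inl rfl⟩
      · exact ⟨_, rfl, Or.inr rfl⟩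
    obtain ⟨y, rfl, hya⟩ := hrepa
    obtain ⟨y', heq, hyb⟩ := hrepb
    obtain ⟨hyal, -⟩ := pair_y_facts j hj h0a hya
    obtain ⟨hybl, hybne⟩ := pair_y_facts j hj h0b hyb
    obtain ⟨hii, h1, h2⟩ := pt_inj hd hyal hybl heq
    subst hii
    have hll : ℓa ≠ ℓb := fun h => hab (by rw [h])
    rw [if_neg (fun hh => hll hh.symm)] at h2
    exact hybne h2

end Constr5

section Constr6

open Finset

variable (m d : ℕ) (hd : 0 < d) (j : ℕ → ℤ)

lemma CC0_clustering (hj : ∀ k, j k = -1 ∨ j k = 0 ∨ j k = 1) :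
    IsClusteringPi d (pointSet m d hd j) (CC0 m d hd j) := by
  constructor
  · intro C hC
    rw [CC0, Finset.mem_image] at hC
    obtain ⟨a, ha, rfl⟩ := hC
    exact ⟨⟨FF d hd j a, FF_mem_GG d hd j a⟩, GG_subset m d hd j hj ha, GG_diam d hd j hj a⟩
  · intro p hp
    obtain ⟨a, ha, hpa⟩ := cover m d hd j hj hp
    refine ⟨GG d hd j a, ⟨Finset.mem_image_of_mem _ ha, hpa⟩, ?_⟩
    rintro C ⟨hC, hpC⟩
    rw [CC0, Finset.mem_image] at hC
    obtain ⟨b, hb, rfl⟩ := hC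
    by_cases hab : b = a
    · rw [hab]
    · exact absurd (GG_disj m d hd j hj hb ha hab hpC hpa) not_false

lemma FF_mem_pointSet (hj : ∀ k, j k = -1 ∨ j k = 0 ∨ j k = 1) {a : ℕ × Option (Fin d)}
    (ha : a ∈ Idx m d j) : FF d hd j a ∈ pointSet m d hd j :=
  GG_subset m d hd j hj ha (FF_mem_GG d hd j a)

lemma abs_fpt_y (hj : ∀ k, j k = -1 ∨ j k = 0 ∨ j k = 1) {k : ℕ} (h0 : j k ≠ 0) :
    |1.1 * (j k : ℝ)| = 1.1 := by
  rcases s_cases j hj h0 with h | h <;> rw [h] <;> push_cast <;> norm_num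

lemma FF_sep (hj : ∀ k, j k = -1 ∨ j k = 0 ∨ j k = 1) :
    ∀ a ∈ Idx m d j, ∀ b ∈ Idx m d j, a ≠ b → 1 < dist (FF d hd j a) (FF d hd j b) := by
  have habs0 : |(0:ℝ)| ≤ 1.1 := by norm_num
  rintro ⟨ia, _ | ℓa⟩ ha ⟨ib, _ | ℓb⟩ hb hab
  · have hne : ia ≠ ib := fun h => hab (by rw [h])
    exact one_lt_dist_pt_cross hd hne habs0 habs0
  · have h0 := (mem_Idx_iff m d j |>.mp hb).2 ℓb rfl
    have habs : |1.1 * (j (kk d ib ℓb) : ℝ)| ≤ 1.1 := le_of_eq (abs_fpt_y j hj h0)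
    by_cases hii : ia = ib
    · subst hii
      rw [show FF d hd j (ia, none) = pt d hd (4*ia) ⟨0,hd⟩ 0 from rfl,
        show FF d hd j (ia, some ℓb) = pt d hd (4*ia) ℓb (1.1 * (j (kk d ia ℓb) : ℝ)) from rfl,
        dist_comm]
      apply one_lt_dist_pt_same hd
      have : (if ℓb = (⟨0,hd⟩ : Fin d) then (0:ℝ) else 0) = 0 := by split_ifs <;> rfl
      rw [this, sub_zero, abs_fpt_y j hj h0]
      norm_num
    · exact one_lt_dist_pt_cross hd hii habs0 habs
  · have h0 := (mem_Idx_iff m d j |>.mp ha).2 ℓa rfl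
    have habs : |1.1 * (j (kk d ia ℓa) : ℝ)| ≤ 1.1 := le_of_eq (abs_fpt_y j hj h0)
    by_cases hii : ia = ib
    · subst hii
      rw [show FF d hd j (ia, none) = pt d hd (4*ia) ⟨0,hd⟩ 0 from rfl,
        show FF d hd j (ia, some ℓa) = pt d hd (4*ia) ℓa (1.1 * (j (kk d ia ℓa) : ℝ)) from rfl]
      apply one_lt_dist_pt_same hd
      have : (if ℓa = (⟨0,hd⟩ : Fin d) then (0:ℝ) else 0) = 0 := by split_ifs <;> rfl
      rw [this, sub_zero, abs_fpt_y j hj h0]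
      norm_num
    · exact one_lt_dist_pt_cross hd hii habs habs0
  · have h0a := (mem_Idx_iff m d j |>.mp ha).2 ℓa rfl
    have h0b := (mem_Idx_iff m d j |>.mp hb).2 ℓb rfl
    have habsa : |1.1 * (j (kk d ia ℓa) : ℝ)| ≤ 1.1 := le_of_eq (abs_fpt_y j hj h0a)
    have habsb : |1.1 * (j (kk d ib ℓb) : ℝ)| ≤ 1.1 := le_of_eq (abs_fpt_y j hj h0b)
    by_cases hii : ia = ib
    · subst hii
      have hll : ℓa ≠ ℓb := fun h => hab (by rw [h])
      rw [show FF d hd j (ia, some ℓa) = pt d hd (4*ia) ℓa (1.1 * (j (kk d ia ℓa) : ℝ)) from rfl,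
        show FF d hd j (ia, some ℓb) = pt d hd (4*ia) ℓb (1.1 * (j (kk d ia ℓb) : ℝ)) from rfl]
      apply one_lt_dist_pt_same hd
      rw [if_neg hll, sub_zero, abs_fpt_y j hj h0a]
      norm_num
    · exact one_lt_dist_pt_cross hd hii habsa habsb

/-- Generic lower bound: pairwise separated points force many clusters;
moreover if the clustering attains the bound, each cluster contains a separated point. -/
lemma clustering_lb {P : Finset (Fin d → ℝ)} {𝒞 : Finset (Finset (Fin d → ℝ))}
    (hC : IsClusteringPi d P 𝒞) {α : Type*} [DecidableEq α] (I : Finset α)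
    (F : α → (Fin d → ℝ)) (hFP : ∀ a ∈ I, F a ∈ P)
    (hsep : ∀ a ∈ I, ∀ b ∈ I, a ≠ b → 1 < dist (F a) (F b)) :
    I.card ≤ 𝒞.card ∧ (𝒞.card ≤ I.card → ∀ C ∈ 𝒞, ∃ a ∈ I, F a ∈ C) := by
  classical
  set f : α → Finset (Fin d → ℝ) := fun a =>
    if h : ∃ C, C ∈ 𝒞 ∧ F a ∈ C then h.choose else ∅ with hf
  have hmem : ∀ a ∈ I, f a ∈ 𝒞 ∧ F a ∈ f a := by
    intro a ha
    obtain ⟨C, hC', -⟩ := hC.2 (F a) (hFP a ha)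
    have hex : ∃ C, C ∈ 𝒞 ∧ F a ∈ C := ⟨C, hC'⟩
    rw [hf]
    simp only [dif_pos hex]
    exact hex.choose_spec
  have hinj : Set.InjOn f I := by
    intro a ha b hb hfe
    by_contra hne
    have h1 := (hmem a ha).2
    have h2 := (hmem b hb).2
    rw [hfe] at h1
    have hd1 := (hC.1 (f b) (hmem b hb).1).2.2 _ h1 _ h2
    exact absurd (hsep a ha b hb hne) (not_lt.mpr hd1)
  have hsub : I.image f ⊆ 𝒞 := by
    intro C hC'
    rw [Finset.mem_image] at hC'
    obtain ⟨a, ha, rfl⟩ := hC'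
    exact (hmem a ha).1
  have hcard : (I.image f).card = I.card := Finset.card_image_of_injOn hinj
  constructor
  · calc I.card = (I.image f).card := hcard.symm
    _ ≤ 𝒞.card := Finset.card_le_card hsub
  · intro hle C hCmem
    have : I.image f = 𝒞 := Finset.eq_of_subset_of_card_le hsub (by omega)
    rw [← this, Finset.mem_image] at hCmem
    obtain ⟨a, ha, rfl⟩ := hCmem
    exact ⟨a, ha, (hmem a ha).2⟩

/-- In an optimal clustering, every cluster contains a far point. -/
lemma opt_cluster_far (hj : ∀ k, j k = -1 ∨ j k = 0 ∨ j k = 1)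
    {𝒞 : Finset (Finset (Fin d → ℝ))} (hC : IsClusteringPi d (pointSet m d hd j) 𝒞)
    (hopt : 𝒞.card = minClustersPi d (pointSet m d hd j)) :
    ∀ C ∈ 𝒞, ∃ a ∈ Idx m d j, FF d hd j a ∈ C := by
  have hlb := clustering_lb d hC (Idx m d j) (FF d hd j)
    (fun a ha => FF_mem_pointSet m d hd j hj ha) (FF_sep m d hd j hj)
  apply hlb.2
  have hCC0card : (CC0 m d hd j).card ≤ (Idx m d j).card := Finset.card_image_le
  have hmin : minClustersPi d (pointSet m d hd j) ≤ (CC0 m d hd j).card :=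
    Nat.sInf_le ⟨CC0 m d hd j, CC0_clustering m d hd j hj, rfl⟩
  omega

end Constr6

section KeyLemma

open Finset

variable (m d : ℕ) (hd : 0 < d) (j : ℕ → ℤ)

lemma key_lemma (hj : ∀ k, j k = -1 ∨ j k = 0 ∨ j k = 1)
    {𝒞 : Finset (Finset (Fin d → ℝ))} (hC : IsClusteringPi d (pointSet m d hd j) 𝒞)
    (hopt : 𝒞.card = minClustersPi d (pointSet m d hd j))
    {i : ℕ} (hi : i ∈ Finset.Icc 1 m) (ℓ : Fin d) {s : ℤ} (hs : s = 1 ∨ s = -1) :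
    (∃ C ∈ 𝒞, pt d hd (4*i) ⟨0,hd⟩ 0 ∈ C ∧ pt d hd (4*i) ℓ (0.5 * (s:ℝ)) ∈ C) ↔
      j (kk d i ℓ) ≠ s := by
  have hs0 : s ≠ 0 := by rcases hs with rfl | rfl <;> norm_num
  have hqmem : pt d hd (4*i) ℓ (0.5 * (s:ℝ)) ∈ pointSet m d hd j := by
    rw [mem_pointSet_iff]
    refine Or.inl ((mem_core_iff m d hd).mpr ⟨i, hi, Or.inr ⟨ℓ, ?_⟩⟩)
    rcases hs with rfl | rfl
    · exact Or.inr (pt_congr d hd ℓ (by push_cast; norm_num)).symm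
    · exact Or.inl (pt_congr d hd ℓ (by push_cast; norm_num)).symm
  have habs05 : |0.5 * (s:ℝ)| ≤ 1.1 := by
    rcases hs with rfl | rfl <;> push_cast <;> norm_num [abs_le]
  constructor
  · -- if the center and the ±0.5 point are together, then j ≠ s
    rintro ⟨C, hCm, hcC, hqC⟩ hjs
    -- the 0.9-point
    set p₀ : Fin d → ℝ := pt d hd (4*i) ℓ (-0.9 * (s:ℝ)) with hp₀def
    have hp₀mem : p₀ ∈ pointSet m d hd j := by
      rw [mem_pointSet_iff]
      refine Or.inr ⟨i, hi, ℓ, by rw [hjs]; exact hs0, ?_⟩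
      rw [hjs]
      rcases hs with rfl | rfl
      · exact Or.inl (pt_congr d hd ℓ (by push_cast; norm_num))
      · exact Or.inr (pt_congr d hd ℓ (by push_cast; norm_num))
    have habs09 : |(-0.9) * (s:ℝ)| ≤ 1.1 := by
      rcases hs with rfl | rfl <;> push_cast <;> norm_num [abs_le]
    obtain ⟨C₁, ⟨hC₁m, hp₀C₁⟩, -⟩ := hC.2 p₀ hp₀mem
    obtain ⟨a, ha, hFa⟩ := opt_cluster_far m d hd j hj hC hopt C₁ hC₁m
    have hdiam₁ := (hC.1 C₁ hC₁m).2.2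
    have hdist : dist (FF d hd j a) p₀ ≤ 1 := hdiam₁ _ hFa _ hp₀C₁
    have hFac : FF d hd j a = pt d hd (4*i) ⟨0,hd⟩ 0 := by
      rcases a with ⟨ia, _ | ℓa⟩
      · rw [show FF d hd j (ia, none) = pt d hd (4*ia) ⟨0,hd⟩ 0 from rfl] at hdist ⊢
        by_cases hii : ia = i
        · subst hii; rfl
        · have := one_lt_dist_pt_cross hd hii (by norm_num : |(0:ℝ)| ≤ 1.1) habs09
            (ℓ := ⟨0,hd⟩) (ℓ' := ℓ)
          exact absurd hdist (not_le.mpr this)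
      · exfalso
        have h0a := (mem_Idx_iff m d j |>.mp ha).2 ℓa rfl
        rw [show FF d hd j (ia, some ℓa) =
          pt d hd (4*ia) ℓa (1.1 * (j (kk d ia ℓa) : ℝ)) from rfl] at hdist
        by_cases hii : ia = i
        · subst hii
          by_cases hll : ℓa = ℓ
          · subst hll
            have : 1 < dist (pt d hd (4*ia) ℓa (1.1 * (j (kk d ia ℓa) : ℝ)))
                (pt d hd (4*ia) ℓa (-0.9 * (s:ℝ))) := by
              apply one_lt_dist_pt_same hd
              rw [if_pos rfl, hjs]
              rcases hs with rfl | rfl <;> push_cast <;> norm_num [lt_abs]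
            exact absurd hdist (not_le.mpr this)
          · have : 1 < dist (pt d hd (4*ia) ℓa (1.1 * (j (kk d ia ℓa) : ℝ)))
                (pt d hd (4*ia) ℓ (-0.9 * (s:ℝ))) := by
              apply one_lt_dist_pt_same hd
              rw [if_neg hll, sub_zero, abs_fpt_y j hj h0a]
              norm_num
            exact absurd hdist (not_le.mpr this)
        · have := one_lt_dist_pt_cross hd hii (le_of_eq (abs_fpt_y j hj h0a)) habs09
            (ℓ := ℓa) (ℓ' := ℓ)
          exact absurd hdist (not_le.mpr this)
    rw [hFac] at hFa
    -- C and C₁ both contain the center, hence equal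
    have hcmem : pt d hd (4*i) ⟨0,hd⟩ 0 ∈ pointSet m d hd j := by
      rw [mem_pointSet_iff]
      exact Or.inl ((mem_core_iff m d hd).mpr ⟨i, hi, Or.inl rfl⟩)
    obtain ⟨Cc, -, hcu⟩ := hC.2 _ hcmem
    have he1 : C = Cc := hcu C ⟨hCm, hcC⟩
    have he2 : C₁ = Cc := hcu C₁ ⟨hC₁m, hFa⟩
    have hqC₁ : pt d hd (4*i) ℓ (0.5 * (s:ℝ)) ∈ C₁ := by rw [he2, ← he1]; exact hqC
    have hbad := hdiam₁ _ hqC₁ _ hp₀C₁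
    have : 1 < dist (pt d hd (4*i) ℓ (0.5 * (s:ℝ))) (pt d hd (4*i) ℓ (-0.9 * (s:ℝ))) := by
      apply one_lt_dist_pt_same hd
      rw [if_pos rfl]
      rcases hs with rfl | rfl <;> push_cast <;> norm_num [lt_abs]
    exact absurd hbad (not_le.mpr this)
  · -- if j ≠ s, the center and the ±0.5 point are together
    intro hjs
    obtain ⟨C, ⟨hCm, hqC⟩, -⟩ := hC.2 _ hqmem
    obtain ⟨a, ha, hFa⟩ := opt_cluster_far m d hd j hj hC hopt C hCm
    have hdiam := (hC.1 C hCm).2.2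
    have hdist : dist (FF d hd j a) (pt d hd (4*i) ℓ (0.5 * (s:ℝ))) ≤ 1 := hdiam _ hFa _ hqC
    have hFac : FF d hd j a = pt d hd (4*i) ⟨0,hd⟩ 0 := by
      rcases a with ⟨ia, _ | ℓa⟩
      · rw [show FF d hd j (ia, none) = pt d hd (4*ia) ⟨0,hd⟩ 0 from rfl] at hdist ⊢
        by_cases hii : ia = i
        · subst hii; rfl
        · have := one_lt_dist_pt_cross hd hii (by norm_num : |(0:ℝ)| ≤ 1.1) habs05
            (ℓ := ⟨0,hd⟩) (ℓ' := ℓ)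
          exact absurd hdist (not_le.mpr this)
      · exfalso
        have h0a := (mem_Idx_iff m d j |>.mp ha).2 ℓa rfl
        rw [show FF d hd j (ia, some ℓa) =
          pt d hd (4*ia) ℓa (1.1 * (j (kk d ia ℓa) : ℝ)) from rfl] at hdist
        by_cases hii : ia = i
        · subst hii
          by_cases hll : ℓa = ℓ
          · subst hll
            have hja : j (kk d ia ℓa) = -s := by
              rcases s_cases j hj h0a with h | h <;> rcases hs with rfl | rfl
              · exact absurd h hjs
              · rw [h]; try norm_num
              · rw [h]; try norm_num
              · exact absurd h hjs
            have : 1 < dist (pt d hd (4*ia) ℓa (1.1 * (j (kk d ia ℓa) : ℝ)))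
                (pt d hd (4*ia) ℓa (0.5 * (s:ℝ))) := by
              apply one_lt_dist_pt_same hd
              rw [if_pos rfl, hja]
              rcases hs with rfl | rfl <;> push_cast <;> norm_num [lt_abs]
            exact absurd hdist (not_le.mpr this)
          · have : 1 < dist (pt d hd (4*ia) ℓa (1.1 * (j (kk d ia ℓa) : ℝ)))
                (pt d hd (4*ia) ℓ (0.5 * (s:ℝ))) := by
              apply one_lt_dist_pt_same hd
              rw [if_neg hll, sub_zero, abs_fpt_y j hj h0a]
              norm_num
            exact absurd hdist (not_le.mpr this)
        · have := one_lt_dist_pt_cross hd hii (le_of_eq (abs_fpt_y j hj h0a)) habs05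
            (ℓ := ℓa) (ℓ' := ℓ)
          exact absurd hdist (not_le.mpr this)
    exact ⟨C, hCm, hFac ▸ hFa, hqC⟩

end KeyLemma

section Final

open Finset

lemma restrict_same {d : ℕ} (𝒞 : Finset (Finset (Fin d → ℝ))) (S : Finset (Fin d → ℝ))
    {a b : Fin d → ℝ} (ha : a ∈ S) (hb : b ∈ S) :
    (∃ D ∈ restrict d 𝒞 S, a ∈ D ∧ b ∈ D) ↔ (∃ C ∈ 𝒞, a ∈ C ∧ b ∈ C) := by
  constructor
  · rintro ⟨D, hD, haD, hbD⟩
    rw [_root_.restrict, Finset.mem_filter, Finset.mem_image] at hD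
    obtain ⟨⟨C, hC, rfl⟩, -⟩ := hD
    exact ⟨C, hC, (Finset.mem_inter.mp haD).1, (Finset.mem_inter.mp hbD).1⟩
  · rintro ⟨C, hC, haC, hbC⟩
    refine ⟨C ∩ S, ?_, Finset.mem_inter.mpr ⟨haC, ha⟩, Finset.mem_inter.mpr ⟨hbC, hb⟩⟩
    rw [_root_.restrict, Finset.mem_filter, Finset.mem_image]
    exact ⟨⟨C, hC, rfl⟩, ⟨a, Finset.mem_inter.mpr ⟨haC, ha⟩⟩⟩

end Final

set_option maxHeartbeats 2000000

/-- Distinct advice vectors `j ≠ j'` (in `{−1,0,1}^{md}`) yield point sets whose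
optimal clusterings induce distinct clusterings on the common core: no clustering
of the core extends to an optimal clustering of both point sets. -/
theorem stmt17 (m d : ℕ) (hm : 1 ≤ m) (hd : 0 < d) (j j' : ℕ → ℤ)
    (hj : ∀ k, j k = -1 ∨ j k = 0 ∨ j k = 1)
    (hj' : ∀ k, j' k = -1 ∨ j' k = 0 ∨ j' k = 1)
    (hne : ∃ k, k < m * d ∧ j k ≠ j' k) :
    ¬ ∃ 𝒟 : Finset (Finset (Fin d → ℝ)),
      (∃ 𝒞, IsClusteringPi d (pointSet m d hd j) 𝒞 ∧
        𝒞.card = minClustersPi d (pointSet m d hd j) ∧ restrict d 𝒞 (core m d hd) = 𝒟) ∧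
      (∃ 𝒞', IsClusteringPi d (pointSet m d hd j') 𝒞' ∧
        𝒞'.card = minClustersPi d (pointSet m d hd j') ∧ restrict d 𝒞' (core m d hd) = 𝒟) := by
  rintro ⟨𝒟, ⟨𝒞, hC, hCopt, hCr⟩, ⟨𝒞', hC', hC'opt, hC'r⟩⟩
  obtain ⟨k, hk, hkne⟩ := hne
  set i : ℕ := k / d + 1 with hidef
  set ℓ : Fin d := ⟨k % d, Nat.mod_lt k hd⟩ with hldef
  have hdm := Nat.div_add_mod k d
  have hkk : kk d i ℓ = k := by
    show (i - 1) * d + k % d = k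
    rw [hidef]
    simp only [Nat.add_sub_cancel]
    rw [Nat.mul_comm]
    exact hdm
  have hi : i ∈ Finset.Icc 1 m := by
    rw [Finset.mem_Icc, hidef]
    have h1 : k / d < m := (Nat.div_lt_iff_lt_mul hd).mpr hk
    exact ⟨Nat.succ_le_succ (Nat.zero_le _), Nat.succ_le_of_lt h1⟩
  -- choose the sign s distinguishing j and j'
  obtain ⟨s, hs, hx⟩ : ∃ s : ℤ, (s = 1 ∨ s = -1) ∧ ((j k = s) ↔ ¬(j' k = s)) := by
    by_cases h0 : j k = 0
    · have h0' : j' k ≠ 0 := fun h => hkne (by rw [h0, h])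
      refine ⟨j' k, s_cases j' hj' h0', ?_⟩
      constructor
      · intro h; exact absurd (h.symm.trans h0) h0'
      · intro h; exact absurd rfl h
    · refine ⟨j k, s_cases j hj h0, ?_⟩
      constructor
      · intro _ h; exact hkne h.symm
      · intro _; rfl
  have hccore : pt d hd (4*i) ⟨0,hd⟩ 0 ∈ core m d hd :=
    (mem_core_iff m d hd).mpr ⟨i, hi, Or.inl rfl⟩
  have hqcore : pt d hd (4*i) ℓ (0.5 * (s:ℝ)) ∈ core m d hd := by
    refine (mem_core_iff m d hd).mpr ⟨i, hi, Or.inr ⟨ℓ, ?_⟩⟩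
    rcases hs with rfl | rfl
    · exact Or.inr (pt_congr d hd ℓ (by push_cast; norm_num)).symm
    · exact Or.inl (pt_congr d hd ℓ (by push_cast; norm_num)).symm
  have key1 := key_lemma m d hd j hj hC hCopt hi ℓ hs
  have key2 := key_lemma m d hd j' hj' hC' hC'opt hi ℓ hs
  rw [hkk] at key1 key2
  have b1 := restrict_same 𝒞 (core m d hd) hccore hqcore
  have b2 := restrict_same 𝒞' (core m d hd) hccore hqcore
  rw [hCr] at b1
  rw [hC'r] at b2
  have : (j k ≠ s) ↔ (j' k ≠ s) := by
    rw [← key1, ← key2, ← b1, ← b2]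
  tauto
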